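/- Let Γ be a connected countably infinite graph. Suppose there exists a vertex α such that for all distinct vertices γ, δ with d(α,γ) = d(α,δ), there are infinitely many n ∈ ℕ with S(γ,n) ≠ S(δ,n). Then Aut(Γ) acting on the vertices of Γ has distinguishing number at most 2, i.e., there exists a set Y of vertices whose setwise stabilizer in Aut(Γ) is trivial. -/

import Mathlib

/-- The sphere of radius `n` about `γ`. -/
def sphere {V : Type*} (G : SimpleGraph V) (γ : V) (n : ℕ) : Set V :=
  {v | G.dist γ v = n}

private lemma iso_dist {V : Type*} {G : SimpleGraph V} (hconn : G.Connected)
    (φ : G ≃g G) (u v : V) : G.dist (φ u) (φ v) = G.dist u v := by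
  have key : ∀ (ψ : G ≃g G) (u v : V), G.dist (ψ u) (ψ v) ≤ G.dist u v := by
    intro ψ u v
    obtain ⟨p, hp⟩ := hconn.exists_walk_length_eq_dist u v
    calc G.dist (ψ u) (ψ v) ≤ (p.map ψ.toHom).length := SimpleGraph.dist_le _
      _ = p.length := SimpleGraph.Walk.length_map ψ.toHom p
      _ = G.dist u v := hp
  refine le_antisymm (key φ u v) ?_
  have := key φ.symm (φ u) (φ v)
  simpa using this

/-- The Distinct Spheres Lemma. -/
theorem stmt1 {V : Type*} [Countable V] [Infinite V] (G : SimpleGraph V)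
    (hconn : G.Connected) (α : V)
    (hDSC : ∀ γ δ : V, γ ≠ δ → G.dist α γ = G.dist α δ →
      {n : ℕ | sphere G γ n ≠ sphere G δ n}.Infinite) :
    ∃ Y : Set V, ∀ g : G ≃g G, (∀ v : V, v ∈ Y ↔ g v ∈ Y) → ∀ v : V, g v = v := by
  classical
  have hgd : ∀ (g : G ≃g G) (u v : V), G.dist (g u) (g v) = G.dist u v :=
    fun g u v => iso_dist hconn g u v
  -- key lemma: find witnesses far from α
  have key : ∀ γ δ : V, γ ≠ δ → G.dist α γ = G.dist α δ → ∀ b : ℕ,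
      ∃ u : V, b < G.dist α u ∧ G.dist γ u ≠ G.dist δ u := by
    intro γ δ hne heq b
    obtain ⟨n, hnmem, hngt⟩ := (hDSC γ δ hne heq).exists_gt (b + G.dist α γ)
    have hsph : sphere G γ n ≠ sphere G δ n := hnmem
    have : ∃ u : V, ¬ (G.dist γ u = n ↔ G.dist δ u = n) := by
      by_contra h
      push_neg at h
      exact hsph (Set.ext fun u => h u)
    obtain ⟨u, hu⟩ := this
    have hne2 : G.dist γ u ≠ G.dist δ u := by
      intro h
      exact hu (by rw [h])
    have hor : G.dist γ u = n ∨ G.dist δ u = n := by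
      by_contra hc
      push_neg at hc
      exact hu (iff_of_false hc.1 hc.2)
    have hcγ : G.dist γ α = G.dist α γ := SimpleGraph.dist_comm
    have hcδ : G.dist δ α = G.dist α δ := SimpleGraph.dist_comm
    refine ⟨u, ?_, hne2⟩
    rcases hor with h1 | h1
    · have h2 : G.dist γ u ≤ G.dist γ α + G.dist α u := hconn.dist_triangle
      omega
    · have h2 : G.dist δ u ≤ G.dist δ α + G.dist α u := hconn.dist_triangle
      omega
  by_cases hP : ∃ p : V × V, p.1 ≠ p.2 ∧ G.dist α p.1 = G.dist α p.2
  · -- main case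
    set P := {p : V × V // p.1 ≠ p.2 ∧ G.dist α p.1 = G.dist α p.2} with hPdef
    have : Nonempty P := ⟨⟨hP.choose, hP.choose_spec⟩⟩
    obtain ⟨f, hf⟩ := exists_surjective_nat P
    have keyk : ∀ (k b : ℕ), ∃ u : V, b < G.dist α u ∧
        G.dist (f k).1.1 u ≠ G.dist (f k).1.2 u :=
      fun k b => key (f k).1.1 (f k).1.2 (f k).2.1 (f k).2.2 b
    let pick : ℕ → ℕ → V := fun k b => (keyk k b).choose
    have pick_spec : ∀ k b, b < G.dist α (pick k b) ∧
        G.dist (f k).1.1 (pick k b) ≠ G.dist (f k).1.2 (pick k b) :=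
      fun k b => (keyk k b).choose_spec
    let w : ℕ → V := fun k =>
      Nat.rec (pick 0 2) (fun n prev => pick (n + 1) (G.dist α prev + 1)) k
    set a : ℕ → ℕ := fun k => G.dist α (w k) with ha_def
    have ha0 : 3 ≤ a 0 := (pick_spec 0 2).1
    have haS : ∀ k, a k + 2 ≤ a (k + 1) := by
      intro k
      have := (pick_spec (k + 1) (G.dist α (w k) + 1)).1
      simp only [a, w] at this ⊢; omega
    have hwit : ∀ k, G.dist (f k).1.1 (w k) ≠ G.dist (f k).1.2 (w k) := by
      intro k
      cases k with
      | zero => exact (pick_spec 0 2).2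
      | succ n => exact (pick_spec (n + 1) (G.dist α (w n) + 1)).2
    have ha3 : ∀ k, 3 ≤ a k := by
      intro k
      induction k with
      | zero => exact ha0
      | succ n ih => have := haS n; omega
    have hamono : ∀ j k : ℕ, j < k → a j + 2 ≤ a k := by
      intro j k hjk
      induction k with
      | zero => omega
      | succ n ih =>
        have := haS n
        rcases Nat.lt_succ_iff_lt_or_eq.mp hjk with h | h
        · have := ih h; omega
        · subst h; omega
    -- choose t, a neighbor of α on a geodesic to w 0
    have hstep : ∀ (x : V) (p : G.Walk α x), p.length = G.dist α x → 3 ≤ G.dist α x →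
        ∃ t : V, G.Adj α t ∧ G.dist t x + 1 = G.dist α x := by
      intro x p hp h3
      cases p with
      | nil =>
        rw [SimpleGraph.dist_self] at h3
        omega
      | cons h q =>
        rename_i t'
        refine ⟨t', h, ?_⟩
        have hq : q.length + 1 = G.dist α x := by simpa using hp
        have h1 : G.dist t' x ≤ q.length := SimpleGraph.dist_le q
        have h2 : G.dist α x ≤ G.dist α t' + G.dist t' x := hconn.dist_triangle
        have h4 : G.dist α t' ≤ 1 := by
          have : G.dist α t' ≤ (SimpleGraph.Walk.cons h SimpleGraph.Walk.nil).length :=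
            SimpleGraph.dist_le _
          simpa using this
        omega
    obtain ⟨p, hp⟩ := hconn.exists_walk_length_eq_dist α (w 0)
    obtain ⟨t, ht_adj, ht_dist0⟩ := hstep (w 0) p hp (ha3 0)
    have ht_dist : G.dist t (w 0) + 1 = a 0 := ht_dist0
    have hdt : G.dist α t = 1 := by
      have h3 : G.dist α t ≤ 1 := by
        have : G.dist α t ≤ (SimpleGraph.Walk.cons ht_adj SimpleGraph.Walk.nil).length :=
          SimpleGraph.dist_le _
        simpa using this
      have h4 : G.dist α t ≠ 0 := fun h0 => ht_adj.ne (hconn.dist_eq_zero_iff.mp h0)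
      omega
    have hdtw : ∀ k, a k ≤ 1 + G.dist t (w k) := by
      intro k
      calc a k = G.dist α (w k) := rfl
        _ ≤ G.dist α t + G.dist t (w k) := hconn.dist_triangle
        _ = 1 + G.dist t (w k) := by rw [hdt]
    have hdww : ∀ j k : V, True := fun _ _ => trivial
    refine ⟨insert α (insert t (Set.range w)), ?_⟩
    intro g hg
    set Y : Set V := insert α (insert t (Set.range w)) with hY
    have hmem : ∀ x, x ∈ Y → x = α ∨ x = t ∨ ∃ j, w j = x := by
      intro x hx
      rcases hx with h | h | ⟨j, hj⟩
      · exact Or.inl h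
      · exact Or.inr (Or.inl h)
      · exact Or.inr (Or.inr ⟨j, hj⟩)
    -- distance catalog
    have hdaw : ∀ j, G.dist α (w j) = a j := fun j => rfl
    have hdtwlow : G.dist t (w 0) + 1 = a 0 := ht_dist
    have hdtwj : ∀ j, 0 < j → a 0 < G.dist t (w j) := by
      intro j hj
      have h1 := hdtw j
      have h2 := hamono 0 j hj
      omega
    have hL1 : ∀ x ∈ Y, ∀ y ∈ Y, G.dist x y = 1 → (x = α ∧ y = t) ∨ (x = t ∧ y = α) := by
      intro x hx y hy hxy
      rcases hmem x hx with rfl | rfl | ⟨j, rfl⟩ <;>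
        rcases hmem y hy with rfl | rfl | ⟨k, rfl⟩
      · rw [SimpleGraph.dist_self] at hxy; omega
      · exact Or.inl ⟨rfl, rfl⟩
      · have := ha3 k; rw [hdaw k] at hxy; omega
      · exact Or.inr ⟨rfl, rfl⟩
      · rw [SimpleGraph.dist_self] at hxy; omega
      · -- dist t (w k) = 1 impossible
        have h1 := hdtw k; have := ha3 k; omega
      · have := ha3 j
        rw [SimpleGraph.dist_comm, hdaw j] at hxy; omega
      · have h1 := hdtw j; have := ha3 j
        rw [SimpleGraph.dist_comm] at hxy; omega
      · -- dist (w j) (w k) = 1 impossible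
        rcases lt_trichotomy j k with h | h | h
        · have h2 := hamono j k h
          have h3 : G.dist α (w k) ≤ G.dist α (w j) + G.dist (w j) (w k) :=
            hconn.dist_triangle
          have e1 := hdaw j
          have e2 := hdaw k
          omega
        · subst h; rw [SimpleGraph.dist_self] at hxy; omega
        · have h2 := hamono k j h
          have h3 : G.dist α (w j) ≤ G.dist α (w k) + G.dist (w k) (w j) :=
            hconn.dist_triangle
          have h4 : G.dist (w k) (w j) = G.dist (w j) (w k) := SimpleGraph.dist_comm
          have e1 := hdaw j
          have e2 := hdaw k
          omega
    have hαY : α ∈ Y := Set.mem_insert _ _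
    have htY : t ∈ Y := Set.mem_insert_of_mem _ (Set.mem_insert _ _)
    have hwY : ∀ k, w k ∈ Y := fun k =>
      Set.mem_insert_of_mem _ (Set.mem_insert_of_mem _ ⟨k, rfl⟩)
    have hgα : g α = α := by
      have h1 : G.dist (g α) (g t) = 1 := by rw [hgd]; exact hdt
      rcases hL1 (g α) ((hg α).mp hαY) (g t) ((hg t).mp htY) h1 with ⟨h2, _⟩ | ⟨h2, _⟩
      · exact h2
      · -- g α = t : contradiction via w 0
        exfalso
        have h3 : G.dist t (g (w 0)) = a 0 := by
          rw [← h2, hgd]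
        rcases hmem (g (w 0)) ((hg (w 0)).mp (hwY 0)) with h4 | h4 | ⟨j, h4⟩
        · rw [h4, SimpleGraph.dist_comm, hdt] at h3
          have := ha3 0; omega
        · rw [h4, SimpleGraph.dist_self] at h3
          have := ha3 0; omega
        · rw [← h4] at h3
          rcases Nat.eq_zero_or_pos j with rfl | hj
          · omega
          · have := hdtwj j hj; omega
    have hgw : ∀ k, g (w k) = w k := by
      intro k
      have h1 : G.dist α (g (w k)) = a k := by
        calc G.dist α (g (w k)) = G.dist (g α) (g (w k)) := by rw [hgα]
          _ = G.dist α (w k) := hgd g α (w k)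
      rcases hmem (g (w k)) ((hg (w k)).mp (hwY k)) with h4 | h4 | ⟨j, h4⟩
      · rw [h4, SimpleGraph.dist_self] at h1; have := ha3 k; omega
      · rw [h4, hdt] at h1; have := ha3 k; omega
      · rw [← h4] at h1
        have hjk : j = k := by
          by_contra hne
          rcases lt_or_gt_of_ne hne with h | h
          · have := hamono j k h; rw [hdaw j] at h1; omega
          · have := hamono k j h; rw [hdaw j] at h1; omega
        rw [← h4, hjk]
    intro v
    by_contra hv
    have hvne : v ≠ g v := fun h => hv h.symm
    have hvd : G.dist α v = G.dist α (g v) := by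
      have h := hgd g α v
      rw [hgα] at h
      exact h.symm
    obtain ⟨k, hk⟩ := hf ⟨(v, g v), hvne, hvd⟩
    have hwk := hwit k
    rw [hk] at hwk
    apply hwk
    calc G.dist v (w k) = G.dist (g v) (g (w k)) := (hgd g v (w k)).symm
      _ = G.dist (g v) (w k) := by rw [hgw k]
  · -- no equidistant pairs at all
    refine ⟨{α}, ?_⟩
    intro g hg v
    have hgα : g α = α := by
      have := (hg α).mp rfl
      simpa using this
    by_contra hv
    apply hP
    refine ⟨(v, g v), fun h => hv h.symm, ?_⟩
    have h := hgd g α v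
    rw [hgα] at h
    exact h.symm
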